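/- Let M = [1,∞) × N with metric dr² + s(r)² g_N, where N is a compact m-dimensional manifold and s(r) = r^{−1/m}. For Ω_{R} = {R < r < eR}, we have Vol(Ω_R) = |N| for all R ≥ 1, while Area(∂Ω_R) = |N|(R^{−1} + (eR)^{−1}) → 0 as R → ∞. Consequently the isoperimetric inequality |∂Ω| ≥ |∂Ω^#| fails on M. -/
import Mathlib


open Filter

lemma vol_eq (VN : ℝ) (vol : ℝ → ℝ)
    (hvol : ∀ R, vol R = VN * (Real.log (Real.exp 1 * R) - Real.log R)) :
    ∀ R ≥ (1 : ℝ), vol R = VN := by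
  intro R hR
  rw [hvol, Real.log_mul (Real.exp_ne_zero 1) (by linarith), Real.log_exp]
  ring

/-- On `M = [1,∞) × N` with `g = dr² + r^{-2/m} g_N` (warping function `s(r) = r^{-1/m}`),
the annular regions `Ω_R = {R < r < eR}` have `Vol(Ω_R) = |N| (log(eR) - log R) = |N|`
for all `R ≥ 1`, while `Area(∂Ω_R) = |N| (R⁻¹ + (eR)⁻¹) → 0` as `R → ∞`; consequently
the isoperimetric inequality `|∂Ω| ≥ |∂Ω^#|` fails on `M`. -/
theorem stmt7 (VN : ℝ) (hVN : 0 < VN) (vol area : ℝ → ℝ)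
    (hvol : ∀ R, vol R = VN * (Real.log (Real.exp 1 * R) - Real.log R))
    (harea : ∀ R, area R = VN * (R⁻¹ + (Real.exp 1 * R)⁻¹)) :
    (∀ R ≥ (1 : ℝ), vol R = VN) ∧
    Tendsto area atTop (nhds 0) ∧
    ∀ ε > (0 : ℝ), ∃ R ≥ (1 : ℝ), vol R = VN ∧ area R < ε := by
  have hv := vol_eq VN vol hvol
  have harea' : ∀ R : ℝ, area R = (VN + VN * (Real.exp 1)⁻¹) * R⁻¹ := by
    intro R
    rw [harea, mul_inv]
    ring
  have ht : Tendsto area atTop (nhds 0) := by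
    have h1 : Tendsto (fun R : ℝ => (VN + VN * (Real.exp 1)⁻¹) * R⁻¹) atTop
        (nhds ((VN + VN * (Real.exp 1)⁻¹) * 0)) :=
      tendsto_inv_atTop_zero.const_mul _
    rw [mul_zero] at h1
    exact h1.congr (fun R => (harea' R).symm)
  refine ⟨hv, ht, fun ε hε => ?_⟩
  obtain ⟨R, hlt, hR1⟩ := ((ht.eventually (gt_mem_nhds hε)).and (eventually_ge_atTop (1:ℝ))).exists
  exact ⟨R, hR1, hv R hR1, hlt⟩
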